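/- arXiv:2512.17960 — 2 statements merged into one kernel-verified Lean document; each statement's English description precedes it below -/
import Mathlib

section
/- Let D ⊆ {0,...,n−1} × {0,...,m−1} be a finite digit set, τ(i,j)=j, and t_j = #{i : (i,j) ∈ D}. Among all probability vectors p on D, the quantity H(τ_*p) + β·H(p | τ) (with β ∈ (0,1), where H(p|τ) = H(p) − H(τ_*p)) attains its maximum value log(Σ_j t_j^β), where the sum is over rows j with t_j ≥ 1. -/
open Finset

lemma gibbs' {ι : Type*} (S : Finset ι) (a b : ι → ℝ)
    (ha : ∀ i ∈ S, 0 ≤ a i) (hb : ∀ i ∈ S, 0 ≤ b i)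
    (hab : ∀ i ∈ S, 0 < a i → 0 < b i) :
    ∑ i ∈ S, a i * (Real.log (b i) - Real.log (a i)) ≤
      (∑ i ∈ S, a i) * (Real.log (∑ i ∈ S, b i) - Real.log (∑ i ∈ S, a i)) := by
  set A := ∑ i ∈ S, a i with hA
  set B := ∑ i ∈ S, b i with hB
  rcases eq_or_lt_of_le (Finset.sum_nonneg ha) with h0 | hApos
  · have hz : ∀ i ∈ S, a i = 0 := (Finset.sum_eq_zero_iff_of_nonneg ha).mp h0.symm
    have h1 : ∑ i ∈ S, a i * (Real.log (b i) - Real.log (a i)) = 0 :=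
      Finset.sum_eq_zero fun i hi => by rw [hz i hi]; ring
    have h2 : A = 0 := h0.symm
    rw [h1, h2]; simp
  · have hApos : (0:ℝ) < A := hA ▸ hApos
    have hBpos : 0 < B := by
      obtain ⟨i, hi, hai⟩ := Finset.exists_ne_zero_of_sum_ne_zero (hA ▸ hApos.ne')
      have hai' : 0 < a i := lt_of_le_of_ne (ha i hi) (Ne.symm hai)
      exact lt_of_lt_of_le (hab i hi hai') (Finset.single_le_sum hb hi)
    have key : ∀ i ∈ S, a i * (Real.log (b i) - Real.log (a i)) ≤
        a i * (Real.log B - Real.log A) + (A / B) * b i - a i := by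
      intro i hi
      rcases eq_or_lt_of_le (ha i hi) with h | h
      · rw [← h]
        have h4 : 0 ≤ (A / B) * b i := mul_nonneg (by positivity) (hb i hi)
        simpa using h4
      · have hbi := hab i hi h
        have hx : (0:ℝ) < A * b i / (a i * B) :=
          div_pos (mul_pos hApos hbi) (mul_pos h hBpos)
        have hlog := Real.log_le_sub_one_of_pos hx
        have hlogeq : Real.log (A * b i / (a i * B)) =
            Real.log A + Real.log (b i) - (Real.log (a i) + Real.log B) := by
          rw [Real.log_div (by positivity) (by positivity),
            Real.log_mul hApos.ne' hbi.ne', Real.log_mul h.ne' hBpos.ne']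
        rw [hlogeq] at hlog
        have h2 : a i * (Real.log A + Real.log (b i) - (Real.log (a i) + Real.log B)) ≤
            a i * (A * b i / (a i * B) - 1) := mul_le_mul_of_nonneg_left hlog h.le
        have h3 : a i * (A * b i / (a i * B)) = (A / B) * b i := by
          field_simp
        nlinarith [h2, h3]
    calc ∑ i ∈ S, a i * (Real.log (b i) - Real.log (a i))
        ≤ ∑ i ∈ S, (a i * (Real.log B - Real.log A) + (A / B) * b i - a i) :=
          Finset.sum_le_sum key
      _ = A * (Real.log B - Real.log A) + (A / B) * B - A := by
          rw [Finset.sum_sub_distrib, Finset.sum_add_distrib, ← Finset.sum_mul,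
            ← Finset.mul_sum, ← hA, ← hB]
      _ = A * (Real.log B - Real.log A) := by field_simp; ring

/-- Over all probability vectors `p` on the digit set `D`, the quantity
`H(τ_*p) + β·(H(p) − H(τ_*p))` (with `τ(i,j) = j` and `β ∈ (0,1)`) attains the maximum
value `log (∑_{j : t_j ≥ 1} t_j ^ β)`, where `t_j = #{i : (i,j) ∈ D}`. -/
theorem stmt5 (n m : ℕ) (D : Finset (Fin n × Fin m)) (hD : D.Nonempty)
    (β : ℝ) (hβ : β ∈ Set.Ioo (0 : ℝ) 1)
    (t : Fin m → ℕ) (ht : ∀ j, t j = (D.filter (fun d => d.2 = j)).card) :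
    IsGreatest
      { x : ℝ | ∃ p : Fin n × Fin m → ℝ,
          (∀ d, 0 ≤ p d) ∧ (∀ d, d ∉ D → p d = 0) ∧ (∑ d ∈ D, p d = 1) ∧
          x = (-∑ j, (∑ d ∈ D.filter (fun d => d.2 = j), p d)
                  * Real.log (∑ d ∈ D.filter (fun d => d.2 = j), p d))
              + β * ((-∑ d ∈ D, p d * Real.log (p d))
                  - (-∑ j, (∑ d ∈ D.filter (fun d => d.2 = j), p d)
                      * Real.log (∑ d ∈ D.filter (fun d => d.2 = j), p d))) }
      (Real.log (∑ j ∈ univ.filter (fun j => 1 ≤ t j), (t j : ℝ) ^ β)) := by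
  obtain ⟨hβ0, hβ1⟩ := hβ
  set Z : ℝ := ∑ j : Fin m, (t j : ℝ) ^ β with hZ
  have hZfilt : ∑ j ∈ univ.filter (fun j => 1 ≤ t j), (t j : ℝ) ^ β = Z := by
    rw [hZ]
    apply Finset.sum_subset (Finset.filter_subset _ _)
    intro j _ hj
    simp only [Finset.mem_filter, Finset.mem_univ, true_and, not_le, Nat.lt_one_iff] at hj
    rw [hj]
    norm_num [Real.zero_rpow hβ0.ne']
  have hZpos : 0 < Z := by
    obtain ⟨d0, hd0⟩ := hD
    have ht0 : 0 < t d0.2 := by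
      rw [ht]
      exact Finset.card_pos.mpr ⟨d0, Finset.mem_filter.mpr ⟨hd0, rfl⟩⟩
    have h1 : (0:ℝ) < (t d0.2 : ℝ) ^ β := Real.rpow_pos_of_pos (by exact_mod_cast ht0) β
    exact lt_of_lt_of_le h1 (Finset.single_le_sum
      (fun j _ => Real.rpow_nonneg (Nat.cast_nonneg _) β) (Finset.mem_univ d0.2))
  have hpow : ∀ j : Fin m, ((t j : ℝ)) * (t j : ℝ) ^ (β - 1) = (t j : ℝ) ^ β := by
    intro j
    have h := Real.rpow_one_add' (x := (t j : ℝ)) (y := β - 1) (Nat.cast_nonneg _)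
      (by rw [show (1:ℝ) + (β - 1) = β by ring]; exact hβ0.ne')
    rw [show (1:ℝ) + (β - 1) = β by ring] at h
    exact h.symm
  rw [hZfilt]
  constructor
  · -- membership: the maximizing distribution
    set p : Fin n × Fin m → ℝ := fun d => if d ∈ D then (t d.2 : ℝ) ^ (β - 1) / Z else 0
      with hp
    have hrow : ∀ j, ∑ d ∈ D.filter (fun d => d.2 = j), p d = (t j : ℝ) ^ β / Z := by
      intro j
      have hc : ∀ d ∈ D.filter (fun d => d.2 = j), p d = (t j : ℝ) ^ (β - 1) / Z := by
        intro d hd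
        rw [Finset.mem_filter] at hd
        rw [hp]
        simp only [hd.1, if_true]
        rw [hd.2]
      rw [Finset.sum_congr rfl hc, Finset.sum_const, ← ht j, nsmul_eq_mul,
        ← mul_div_assoc, hpow j]
    have hq1 : ∑ j : Fin m, (t j : ℝ) ^ β / Z = 1 := by
      rw [← Finset.sum_div, ← hZ, div_self hZpos.ne']
    set L : ℝ := ∑ j : Fin m, ((t j : ℝ) ^ β / Z) * Real.log (t j) with hL
    have e1 : ∑ j : Fin m, (∑ d ∈ D.filter (fun d => d.2 = j), p d)
        * Real.log (∑ d ∈ D.filter (fun d => d.2 = j), p d) = β * L - Real.log Z := by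
      simp only [hrow]
      have hterm : ∀ j ∈ (univ : Finset (Fin m)),
          ((t j : ℝ) ^ β / Z) * Real.log ((t j : ℝ) ^ β / Z) =
          β * (((t j : ℝ) ^ β / Z) * Real.log (t j)) - ((t j : ℝ) ^ β / Z) * Real.log Z := by
        intro j _
        rcases Nat.eq_zero_or_pos (t j) with h | h
        · simp [h, Real.zero_rpow hβ0.ne']
        · have hpos : (0:ℝ) < (t j : ℝ) := by exact_mod_cast h
          rw [Real.log_div (Real.rpow_pos_of_pos hpos β).ne' hZpos.ne',
            Real.log_rpow hpos]
          ring
      rw [Finset.sum_congr rfl hterm, Finset.sum_sub_distrib, ← Finset.mul_sum,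
        ← Finset.sum_mul, hq1, ← hL, one_mul]
    have e2 : ∑ d ∈ D, p d * Real.log (p d) = (β - 1) * L - Real.log Z := by
      rw [← Finset.sum_fiberwise D (fun d => d.2) (fun d => p d * Real.log (p d))]
      have hterm : ∀ j ∈ (univ : Finset (Fin m)),
          (∑ d ∈ D.filter (fun d => d.2 = j), p d * Real.log (p d)) =
          (β - 1) * (((t j : ℝ) ^ β / Z) * Real.log (t j)) - ((t j : ℝ) ^ β / Z) * Real.log Z := by
        intro j _
        have hc : ∀ d ∈ D.filter (fun d => d.2 = j), p d * Real.log (p d) =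
            ((t j : ℝ) ^ (β - 1) / Z) * Real.log ((t j : ℝ) ^ (β - 1) / Z) := by
          intro d hd
          rw [Finset.mem_filter] at hd
          rw [hp]
          simp only [hd.1, if_true]
          rw [hd.2]
        rw [Finset.sum_congr rfl hc, Finset.sum_const, ← ht j, nsmul_eq_mul]
        rcases Nat.eq_zero_or_pos (t j) with h | h
        · simp [h, Real.zero_rpow hβ0.ne']
        · have hpos : (0:ℝ) < (t j : ℝ) := by exact_mod_cast h
          rw [Real.log_div (Real.rpow_pos_of_pos hpos (β - 1)).ne' hZpos.ne',
            Real.log_rpow hpos, ← mul_assoc, ← mul_div_assoc, hpow j]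
          ring
      rw [Finset.sum_congr rfl hterm, Finset.sum_sub_distrib, ← Finset.mul_sum,
        ← Finset.sum_mul, hq1, ← hL, one_mul]
    refine ⟨p, ?_, ?_, ?_, ?_⟩
    · intro d
      rw [hp]
      dsimp only
      split
      · positivity
      · exact le_refl 0
    · intro d hd; simp [hp, hd]
    · rw [← Finset.sum_fiberwise D (fun d => d.2) p]
      rw [Finset.sum_congr rfl (fun j _ => hrow j)]
      exact hq1
    · rw [e1, e2]; ring
  · -- upper bound
    rintro x ⟨p, hp0, hpD, hp1, rfl⟩
    set q : Fin m → ℝ := fun j => ∑ d ∈ D.filter (fun d => d.2 = j), p d with hqdef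
    show (-∑ j : Fin m, q j * Real.log (q j))
        + β * ((-∑ d ∈ D, p d * Real.log (p d)) - (-∑ j : Fin m, q j * Real.log (q j)))
        ≤ Real.log Z
    have hq0 : ∀ j, 0 ≤ q j := fun j => Finset.sum_nonneg fun d _ => hp0 d
    have hq1 : ∑ j : Fin m, q j = 1 := (Finset.sum_fiberwise D (fun d => d.2) p).trans hp1
    have hqt : ∀ j, 0 < q j → 0 < t j := by
      intro j h
      by_contra hc
      push_neg at hc
      have h0 : t j = 0 := Nat.le_zero.mp hc
      have : D.filter (fun d => d.2 = j) = ∅ :=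
        Finset.card_eq_zero.mp ((ht j).symm.trans h0)
      rw [hqdef] at h
      simp only [this, Finset.sum_empty] at h
      exact lt_irrefl 0 h
    have hrowb : ∀ j : Fin m, (-∑ d ∈ D.filter (fun d => d.2 = j), p d * Real.log (p d))
        ≤ q j * Real.log (t j) - q j * Real.log (q j) := by
      intro j
      have hg := gibbs' (D.filter (fun d => d.2 = j)) p (fun _ => (1:ℝ))
        (fun d _ => hp0 d) (fun d _ => zero_le_one) (fun d _ _ => one_pos)
      simp only [Real.log_one, zero_sub, mul_neg, Finset.sum_neg_distrib,
        Finset.sum_const, nsmul_eq_mul, mul_one] at hg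
      rw [← ht j] at hg
      calc (-∑ d ∈ D.filter (fun d => d.2 = j), p d * Real.log (p d))
          ≤ q j * (Real.log (t j) - Real.log (q j)) := hg
        _ = q j * Real.log (t j) - q j * Real.log (q j) := by ring
    have hH : (-∑ d ∈ D, p d * Real.log (p d)) ≤
        (∑ j : Fin m, q j * Real.log (t j)) - ∑ j : Fin m, q j * Real.log (q j) := by
      rw [← Finset.sum_fiberwise D (fun d => d.2) (fun d => p d * Real.log (p d)),
        ← Finset.sum_neg_distrib, ← Finset.sum_sub_distrib]
      exact Finset.sum_le_sum fun j _ => hrowb j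
    have step2 : (-∑ j : Fin m, q j * Real.log (q j))
        + β * ∑ j : Fin m, q j * Real.log (t j)
        = ∑ j : Fin m, q j * (Real.log ((t j : ℝ) ^ β) - Real.log (q j)) := by
      rw [Finset.mul_sum, ← Finset.sum_neg_distrib, ← Finset.sum_add_distrib]
      refine Finset.sum_congr rfl fun j _ => ?_
      rcases eq_or_lt_of_le (hq0 j) with h | h
      · rw [← h]; ring
      · rw [Real.log_rpow (by exact_mod_cast hqt j h)]; ring
    have step3 : ∑ j : Fin m, q j * (Real.log ((t j : ℝ) ^ β) - Real.log (q j))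
        ≤ Real.log Z := by
      have hg := gibbs' (univ : Finset (Fin m)) q (fun j => (t j : ℝ) ^ β)
        (fun j _ => hq0 j) (fun j _ => Real.rpow_nonneg (Nat.cast_nonneg _) β)
        (fun j _ h => Real.rpow_pos_of_pos (by exact_mod_cast hqt j h) β)
      rw [hq1, ← hZ, one_mul, Real.log_one, sub_zero] at hg
      exact hg
    have hβle : β * ((-∑ d ∈ D, p d * Real.log (p d)) - (-∑ j : Fin m, q j * Real.log (q j)))
        ≤ β * ∑ j : Fin m, q j * Real.log (t j) := by
      apply mul_le_mul_of_nonneg_left _ hβ0.le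
      linarith [hH]
    linarith [hβle, step2, step3]
end

section
/- The maximum value of the expression (H(Y) + β·H(X|Y))/log m over all probability vectors p on D is achieved by the probability vector p_{i,j} = t_j^{β−1} / Σ_k t_k^β (for (i,j) ∈ D), and equals (1/log m)·log(Σ_j t_j^β). -/
open Finset

/-- Gibbs' inequality (nonnegativity of relative entropy), in the form of a
cross-entropy bound. -/
lemma gibbs_aux {ι : Type*} (s : Finset ι) (p q : ι → ℝ)
    (hp : ∀ i ∈ s, 0 ≤ p i)
    (hsupp : ∀ i ∈ s, p i ≠ 0 → 0 < q i)
    (hq0 : ∀ i ∈ s, 0 ≤ q i)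
    (hps : ∑ i ∈ s, p i = 1) (hqs : ∑ i ∈ s, q i = 1) :
    -∑ i ∈ s, p i * Real.log (p i) ≤ -∑ i ∈ s, p i * Real.log (q i) := by
  have key : ∀ i ∈ s, p i * Real.log (q i) - p i * Real.log (p i) ≤ q i - p i := by
    intro i hi
    rcases eq_or_ne (p i) 0 with h | h
    · simp [h, hq0 i hi]
    · have hpi : 0 < p i := (hp i hi).lt_of_ne (Ne.symm h)
      have hqi := hsupp i hi h
      have hlog : Real.log (q i) - Real.log (p i) = Real.log (q i / p i) :=
        (Real.log_div hqi.ne' hpi.ne').symm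
      calc p i * Real.log (q i) - p i * Real.log (p i)
          = p i * Real.log (q i / p i) := by rw [← hlog]; ring
        _ ≤ p i * (q i / p i - 1) := by
            exact mul_le_mul_of_nonneg_left
              (Real.log_le_sub_one_of_pos (div_pos hqi hpi)) hpi.le
        _ = q i - p i := by field_simp
  have h := Finset.sum_le_sum key
  rw [Finset.sum_sub_distrib, Finset.sum_sub_distrib, hps, hqs] at h
  linarith

/-- The maximum of `(H(Y) + β·H(X|Y))/log m` (with `Y` the row coordinate of
the `D`-valued random variable `X` with law `p`, and `H(X|Y) = H(X) − H(Y)`) over all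
probability vectors `p` on `D` is achieved by `p_{i,j} = t_j^{β−1} / ∑_k t_k^β` and equals
`(1/log m)·log (∑_{j : t_j ≥ 1} t_j^β)`. -/
theorem stmt6 (n m : ℕ) (hm : 2 ≤ m) (D : Finset (Fin n × Fin m)) (hD : D.Nonempty)
    (β : ℝ) (hβ : β ∈ Set.Ioo (0 : ℝ) 1)
    (t : Fin m → ℕ) (ht : ∀ j, t j = (D.filter (fun d => d.2 = j)).card)
    (S : ℝ) (hS : S = ∑ j ∈ univ.filter (fun j => 1 ≤ t j), (t j : ℝ) ^ β)
    (pstar : Fin n × Fin m → ℝ)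
    (hpstar : ∀ d, pstar d = if d ∈ D then (t d.2 : ℝ) ^ (β - 1) / S else 0)
    (F : (Fin n × Fin m → ℝ) → ℝ)
    (hF : ∀ p, F p =
      ((-∑ j, (∑ d ∈ D.filter (fun d => d.2 = j), p d)
            * Real.log (∑ d ∈ D.filter (fun d => d.2 = j), p d))
        + β * ((-∑ d ∈ D, p d * Real.log (p d))
            - (-∑ j, (∑ d ∈ D.filter (fun d => d.2 = j), p d)
                * Real.log (∑ d ∈ D.filter (fun d => d.2 = j), p d))))
      / Real.log m) :
    F pstar = (1 / Real.log m) * Real.log S ∧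
    ∀ p : Fin n × Fin m → ℝ,
      (∀ d, 0 ≤ p d) → (∀ d, d ∉ D → p d = 0) → (∑ d ∈ D, p d = 1) →
      F p ≤ (1 / Real.log m) * Real.log S := by
  obtain ⟨hβ0, hβ1⟩ := hβ
  have hlogm : 0 < Real.log m := Real.log_pos (by exact_mod_cast Nat.lt_of_lt_of_le one_lt_two hm)
  -- positivity of t on D
  have htD : ∀ d ∈ D, 0 < (t d.2 : ℝ) := by
    intro d hd
    have : 0 < (D.filter (fun e => e.2 = d.2)).card :=
      Finset.card_pos.mpr ⟨d, Finset.mem_filter.mpr ⟨hd, rfl⟩⟩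
    rw [ht]; exact_mod_cast this
  -- S > 0
  have hSpos : 0 < S := by
    obtain ⟨d0, hd0⟩ := hD
    rw [hS]
    apply Finset.sum_pos'
    · intro j _; exact Real.rpow_nonneg (Nat.cast_nonneg _) _
    · refine ⟨d0.2, Finset.mem_filter.mpr ⟨Finset.mem_univ _, ?_⟩, ?_⟩
      · have := htD d0 hd0; exact_mod_cast this
      · exact Real.rpow_pos_of_pos (htD d0 hd0) _
  -- S as full sum
  have hSsum : ∑ j : Fin m, (t j : ℝ) ^ β = S := by
    rw [hS]
    symm
    apply Finset.sum_subset (Finset.filter_subset _ _)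
    intro j _ hj
    simp only [Finset.mem_filter, Finset.mem_univ, true_and, not_le, Nat.lt_one_iff] at hj
    rw [hj]
    simp [Real.zero_rpow hβ0.ne']
  -- column sums of pstar
  have hScol : ∀ j, (∑ d ∈ D.filter (fun d => d.2 = j), pstar d) = (t j : ℝ) ^ β / S := by
    intro j
    have hcongr : ∀ d ∈ D.filter (fun d => d.2 = j), pstar d = (t j : ℝ) ^ (β - 1) / S := by
      intro d hd
      obtain ⟨hdD, hdj⟩ := Finset.mem_filter.mp hd
      rw [hpstar, if_pos hdD, hdj]
    rw [Finset.sum_congr rfl hcongr, Finset.sum_const, ← ht, nsmul_eq_mul]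
    rcases Nat.eq_zero_or_pos (t j) with h | h
    · rw [h]; simp [Real.zero_rpow hβ0.ne']
    · have htj : (0 : ℝ) < t j := by exact_mod_cast h
      rw [show β = β - 1 + 1 by ring, Real.rpow_add_one htj.ne']
      ring
  -- pstar sums to 1
  have hpstar_sum : ∑ d ∈ D, pstar d = 1 := by
    rw [← Finset.sum_fiberwise D (fun d => d.2) pstar]
    simp_rw [hScol]
    rw [← Finset.sum_div, hSsum, div_self hSpos.ne']
  -- fiberwise identity
  have hfib : ∀ (p : Fin n × Fin m → ℝ) (g : Fin m → ℝ),
      ∑ j, (∑ d ∈ D.filter (fun d => d.2 = j), p d) * g j = ∑ d ∈ D, p d * g d.2 := by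
    intro p g
    rw [← Finset.sum_fiberwise D (fun d => d.2) (fun d => p d * g d.2)]
    refine Finset.sum_congr rfl fun j _ => ?_
    rw [Finset.sum_mul]
    refine Finset.sum_congr rfl fun d hd => ?_
    rw [(Finset.mem_filter.mp hd).2]
  -- column sums sum to the total
  have hQtot : ∀ (p : Fin n × Fin m → ℝ),
      ∑ j, (∑ d ∈ D.filter (fun d => d.2 = j), p d) = ∑ d ∈ D, p d :=
    fun p => Finset.sum_fiberwise D (fun d => d.2) p
  -- empty columns
  have hQ0 : ∀ (p : Fin n × Fin m → ℝ) (j : Fin m), t j = 0 →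
      (∑ d ∈ D.filter (fun d => d.2 = j), p d) = 0 := by
    intro p j h
    have : D.filter (fun d => d.2 = j) = ∅ := Finset.card_eq_zero.mp ((ht j).symm.trans h ▸ rfl)
    rw [this, Finset.sum_empty]
  -- cross entropy w.r.t. pstar on D
  have hcrossD : ∀ (p : Fin n × Fin m → ℝ), (∑ d ∈ D, p d = 1) →
      ∑ d ∈ D, p d * Real.log (pstar d)
        = (β - 1) * (∑ d ∈ D, p d * Real.log (t d.2)) - Real.log S := by
    intro p hp1
    have hcongr : ∀ d ∈ D, p d * Real.log (pstar d)
        = (β - 1) * (p d * Real.log (t d.2)) - Real.log S * p d := by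
      intro d hd
      have htd := htD d hd
      rw [hpstar, if_pos hd, Real.log_div (Real.rpow_pos_of_pos htd _).ne' hSpos.ne',
        Real.log_rpow htd]
      ring
    rw [Finset.sum_congr rfl hcongr, Finset.sum_sub_distrib, ← Finset.mul_sum,
      ← Finset.mul_sum, hp1]
    ring
  -- cross entropy w.r.t. the column distribution (t j)^β / S
  have hcrossQ : ∀ (p : Fin n × Fin m → ℝ), (∑ d ∈ D, p d = 1) →
      ∑ j, (∑ d ∈ D.filter (fun d => d.2 = j), p d) * Real.log ((t j : ℝ) ^ β / S)
        = β * (∑ d ∈ D, p d * Real.log (t d.2)) - Real.log S := by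
    intro p hp1
    have hcongr : ∀ j ∈ (univ : Finset (Fin m)),
        (∑ d ∈ D.filter (fun d => d.2 = j), p d) * Real.log ((t j : ℝ) ^ β / S)
          = β * ((∑ d ∈ D.filter (fun d => d.2 = j), p d) * Real.log (t j))
            - Real.log S * (∑ d ∈ D.filter (fun d => d.2 = j), p d) := by
      intro j _
      rcases Nat.eq_zero_or_pos (t j) with h | h
      · rw [hQ0 p j h]; ring
      · have htj : (0 : ℝ) < t j := by exact_mod_cast h
        rw [Real.log_div (Real.rpow_pos_of_pos htj _).ne' hSpos.ne', Real.log_rpow htj]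
        ring
    rw [Finset.sum_congr rfl hcongr, Finset.sum_sub_distrib, ← Finset.mul_sum,
      ← Finset.mul_sum, hfib p (fun j => Real.log (t j)), hQtot, hp1]
    ring
  -- the column distribution sums to 1
  have hqq1 : ∑ j : Fin m, (t j : ℝ) ^ β / S = 1 := by
    rw [← Finset.sum_div, hSsum, div_self hSpos.ne']
  constructor
  · -- value at pstar
    set L : ℝ := ∑ d ∈ D, pstar d * Real.log (t d.2) with hL
    have hB : ∑ d ∈ D, pstar d * Real.log (pstar d) = (β - 1) * L - Real.log S :=
      hcrossD pstar hpstar_sum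
    have hA : ∑ j, (∑ d ∈ D.filter (fun d => d.2 = j), pstar d)
        * Real.log (∑ d ∈ D.filter (fun d => d.2 = j), pstar d) = β * L - Real.log S := by
      have : ∀ j ∈ (univ : Finset (Fin m)),
          (∑ d ∈ D.filter (fun d => d.2 = j), pstar d)
            * Real.log (∑ d ∈ D.filter (fun d => d.2 = j), pstar d)
          = (∑ d ∈ D.filter (fun d => d.2 = j), pstar d) * Real.log ((t j : ℝ) ^ β / S) := by
        intro j _
        rw [hScol j]
      rw [Finset.sum_congr rfl this, hcrossQ pstar hpstar_sum]
    rw [hF, hA, hB]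
    field_simp
    ring
  · -- the maximality
    intro p hp0 hpD hp1
    set L : ℝ := ∑ d ∈ D, p d * Real.log (t d.2) with hL
    -- Gibbs on D
    have hB : -∑ d ∈ D, p d * Real.log (p d) ≤ Real.log S + (1 - β) * L := by
      have h := gibbs_aux D p pstar (fun d _ => hp0 d)
        (fun d hd _ => by
          rw [hpstar, if_pos hd]
          exact div_pos (Real.rpow_pos_of_pos (htD d hd) _) hSpos)
        (fun d hd => by
          rw [hpstar, if_pos hd]
          exact le_of_lt (div_pos (Real.rpow_pos_of_pos (htD d hd) _) hSpos))
        hp1 hpstar_sum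
      rw [hcrossD p hp1] at h
      linarith
    -- Gibbs on columns
    have hA : -∑ j, (∑ d ∈ D.filter (fun d => d.2 = j), p d)
        * Real.log (∑ d ∈ D.filter (fun d => d.2 = j), p d) ≤ Real.log S - β * L := by
      have h := gibbs_aux (univ : Finset (Fin m))
        (fun j => ∑ d ∈ D.filter (fun d => d.2 = j), p d)
        (fun j => (t j : ℝ) ^ β / S)
        (fun j _ => Finset.sum_nonneg fun d _ => hp0 d)
        (fun j _ hne => by
          rcases Nat.eq_zero_or_pos (t j) with h | h
          · exact absurd (hQ0 p j h) hne
          · have htj : (0 : ℝ) < t j := by exact_mod_cast h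
            exact div_pos (Real.rpow_pos_of_pos htj _) hSpos)
        (fun j _ => div_nonneg (Real.rpow_nonneg (Nat.cast_nonneg _) _) hSpos.le)
        (by rw [hQtot, hp1]) hqq1
      rw [hcrossQ p hp1] at h
      linarith
    rw [hF]
    set A : ℝ := -∑ j, (∑ d ∈ D.filter (fun d => d.2 = j), p d)
      * Real.log (∑ d ∈ D.filter (fun d => d.2 = j), p d) with hAdef
    set B : ℝ := -∑ d ∈ D, p d * Real.log (p d) with hBdef
    have h1' : (1 - β) * A ≤ (1 - β) * (Real.log S - β * L) :=
      mul_le_mul_of_nonneg_left hA (by linarith)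
    have h2' : β * B ≤ β * (Real.log S + (1 - β) * L) :=
      mul_le_mul_of_nonneg_left hB hβ0.le
    have hid : (1 - β) * (Real.log S - β * L) + β * (Real.log S + (1 - β) * L)
        = Real.log S := by ring
    have hnum : A + β * (B - A) ≤ Real.log S := by nlinarith [h1', h2']
    rw [div_le_iff₀ hlogm]
    calc A + β * (B - A) ≤ Real.log S := hnum
      _ = 1 / Real.log m * Real.log S * Real.log m := by field_simp
end
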